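/- Let A ⊆ ℝⁿ be nonempty and reflection-invariant and B := A ∩ ℝ≥0ⁿ. If p is a best approximation to x from A, then |p| (entrywise absolute value) is a best approximation to |x| from B. -/

import Mathlib

noncomputable section

def projSet {n : ℕ} (M : Set (EuclideanSpace ℝ (Fin n))) (x : EuclideanSpace ℝ (Fin n)) :
    Set (EuclideanSpace ℝ (Fin n)) :=
  {p | p ∈ M ∧ ∀ q ∈ M, ‖p - x‖ ≤ ‖q - x‖}

def ReflInvariant {n : ℕ} (M : Set (EuclideanSpace ℝ (Fin n))) : Prop :=
  ∀ x ∈ M, ∀ b : Fin n → ℝ, (∀ i, b i = 1 ∨ b i = -1) →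
    (WithLp.toLp 2 (fun i => b i * x i) : EuclideanSpace ℝ (Fin n)) ∈ M

theorem abs_of_proj_is_proj_onto_nonneg_part
    {n : ℕ} (A : Set (EuclideanSpace ℝ (Fin n))) (hA : A.Nonempty)
    (hrefl : ReflInvariant A)
    (B : Set (EuclideanSpace ℝ (Fin n)))
    (hB : B = A ∩ {y | ∀ i, 0 ≤ y i})
    (x p : EuclideanSpace ℝ (Fin n)) (hp : p ∈ projSet A x) :
    (WithLp.toLp 2 (fun i => |p i|) : EuclideanSpace ℝ (Fin n)) ∈
      projSet B (WithLp.toLp 2 (fun i => |x i|) : EuclideanSpace ℝ (Fin n)) := by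
  obtain ⟨hpA, hopt⟩ := hp
  have norm_le : ∀ u v : EuclideanSpace ℝ (Fin n), (∀ i, |u i| ≤ |v i|) → ‖u‖ ≤ ‖v‖ := by
    intro u v h
    rw [EuclideanSpace.norm_eq, EuclideanSpace.norm_eq]
    apply Real.sqrt_le_sqrt
    apply Finset.sum_le_sum
    intro i _
    rw [Real.norm_eq_abs, Real.norm_eq_abs]
    exact pow_le_pow_left₀ (abs_nonneg _) (h i) 2
  -- sign function for p
  set bp : Fin n → ℝ := fun i => if 0 ≤ p i then 1 else -1 with hbp
  have hbp1 : ∀ i, bp i = 1 ∨ bp i = -1 := fun i => by by_cases h : 0 ≤ p i <;> simp [hbp, h]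
  have habs_p : ∀ i, bp i * p i = |p i| := by
    intro i; by_cases h : 0 ≤ p i
    · simp [hbp, h, abs_of_nonneg h]
    · simp [hbp, h, abs_of_neg (lt_of_not_ge h)]
  have hpmem : (WithLp.toLp 2 (fun i => |p i|) : EuclideanSpace ℝ (Fin n)) ∈ A := by
    have := hrefl p hpA bp hbp1
    convert this using 2
    funext i; exact (habs_p i).symm
  set pa : EuclideanSpace ℝ (Fin n) := WithLp.toLp 2 (fun i => |p i|) with hpa
  set xa : EuclideanSpace ℝ (Fin n) := WithLp.toLp 2 (fun i => |x i|) with hxa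
  refine ⟨?_, ?_⟩
  · rw [hB]
    exact ⟨hpmem, fun i => abs_nonneg _⟩
  · intro q hq
    rw [hB] at hq
    obtain ⟨hqA, hqnn⟩ := hq
    -- sign function for x
    set bx : Fin n → ℝ := fun i => if 0 ≤ x i then 1 else -1 with hbx
    have hbx1 : ∀ i, bx i = 1 ∨ bx i = -1 := fun i => by by_cases h : 0 ≤ x i <;> simp [hbx, h]
    have habs_x : ∀ i, bx i * x i = |x i| := by
      intro i; by_cases h : 0 ≤ x i
      · simp [hbx, h, abs_of_nonneg h]
      · simp [hbx, h, abs_of_neg (lt_of_not_ge h)]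
    set q' : EuclideanSpace ℝ (Fin n) := WithLp.toLp 2 (fun i => bx i * q i) with hq'
    have hq'A : q' ∈ A := hrefl q hqA bx hbx1
    have step1 : ‖pa - xa‖ ≤ ‖p - x‖ := by
      apply norm_le
      intro i
      have h1 : (pa - xa) i = |p i| - |x i| := rfl
      have h2 : (p - x) i = p i - x i := rfl
      rw [h1, h2]
      exact abs_abs_sub_abs_le_abs_sub _ _
    have step2 : ‖q' - x‖ = ‖q - xa‖ := by
      rw [EuclideanSpace.norm_eq, EuclideanSpace.norm_eq]
      congr 1
      apply Finset.sum_congr rfl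
      intro i _
      have h1 : (q' - x) i = bx i * q i - x i := rfl
      have h2 : (q - xa) i = q i - |x i| := rfl
      rw [h1, h2, Real.norm_eq_abs, Real.norm_eq_abs]
      rcases hbx1 i with h | h
      · rw [← habs_x i, h]; ring_nf
      · rw [← habs_x i, h]
        rw [show -1 * q i - x i = -(q i - -1 * x i) by ring, abs_neg]
    show ‖pa - xa‖ ≤ ‖q - xa‖
    calc ‖pa - xa‖ ≤ ‖p - x‖ := step1
      _ ≤ ‖q' - x‖ := hopt q' hq'A
      _ = ‖q - xa‖ := step2

end
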